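/- Full conformal prediction coverage: if (X_1,Y_1),...,(X_{n+1},Y_{n+1}) are exchangeable and the scores R_1,...,R_{n+1} are exchangeable real random variables, then P(R_{n+1} ≤ Quantile_{1−α}((1/(n+1)) Σ_{i=1}^{n+1} δ_{R_i})) ≥ 1 − α, i.e., the probability that the test score is at most the (1−α)-quantile of the empirical distribution of all n+1 scores is at least 1 − α. -/
import Mathlib

open MeasureTheory Finset
open scoped ENNReal

/-- Permuting the indices does not change the cardinality of a filter over `univ`. -/
lemma card_filter_perm {n : ℕ} (σ : Equiv.Perm (Fin n)) (P : Fin n → Prop) [DecidablePred P] :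
    (univ.filter fun q => P (σ q)).card = (univ.filter P).card := by
  apply Finset.card_bij (fun q _ => σ q)
  · intro q hq
    simp only [Finset.mem_filter, Finset.mem_univ, true_and] at hq ⊢
    exact hq
  · intro a _ b _ h
    exact σ.injective h
  · intro j hj
    simp only [Finset.mem_filter, Finset.mem_univ, true_and] at hj
    exact ⟨σ.symm j, by simpa using hj, by simp⟩

/-- On `Fin (n+1)` the number of indices with value `< m` is `m`, if `m ≤ n+1`. -/
lemma card_filter_val_lt {n m : ℕ} (hm : m ≤ n + 1) :
    (univ.filter fun p : Fin (n + 1) => (p : ℕ) < m).card = m := by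
  have key : (univ.filter fun p : Fin (n + 1) => (p : ℕ) < m).card = (Finset.range m).card := by
    apply Finset.card_bij (fun (p : Fin (n + 1)) (_ : p ∈ univ.filter fun p : Fin (n + 1) => (p : ℕ) < m) => (p : ℕ))
    · intro p hp
      simp only [Finset.mem_filter, Finset.mem_univ, true_and] at hp
      simpa using hp
    · intro a _ b _ h
      exact Fin.val_injective h
    · intro a ha
      simp only [Finset.mem_range] at ha
      exact ⟨⟨a, lt_of_lt_of_le ha hm⟩, by simpa using ha, rfl⟩
  rw [key, Finset.card_range]

/-- At least `m` indices have strict rank `< m`. -/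
lemma rank_count {n : ℕ} (r : Fin (n + 1) → ℝ) (m : ℕ) (hm : m ≤ n + 1) :
    m ≤ (univ.filter fun j => (univ.filter fun i => r i < r j).card < m).card := by
  set σ := Tuple.sort r with hσ
  have hmono := Tuple.monotone_sort r
  have hsub : (univ.filter fun p : Fin (n + 1) => (p : ℕ) < m).image σ ⊆
      univ.filter fun j => (univ.filter fun i => r i < r j).card < m := by
    intro j hj
    simp only [Finset.mem_image, Finset.mem_filter, Finset.mem_univ, true_and] at hj ⊢
    obtain ⟨p, hp, rfl⟩ := hj
    calc (univ.filter fun i => r i < r (σ p)).card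
        = (univ.filter fun q => r (σ q) < r (σ p)).card := (card_filter_perm σ _).symm
      _ ≤ (Finset.Iio p).card := by
          apply Finset.card_le_card
          intro q hq
          simp only [Finset.mem_filter, Finset.mem_univ, true_and] at hq
          simp only [Finset.mem_Iio]
          by_contra h
          push_neg at h
          exact absurd (hmono h) (not_le.mpr hq)
      _ = (p : ℕ) := Fin.card_Iio p
      _ < m := hp
  calc m = ((univ.filter fun p : Fin (n + 1) => (p : ℕ) < m).image σ).card := by
        rw [Finset.card_image_of_injective _ σ.injective, card_filter_val_lt hm]
    _ ≤ _ := Finset.card_le_card hsub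

/-- If the strict rank of `r j` is `< (1-α)(n+1)`, then `r j` is at most the empirical
`(1-α)`-quantile. -/
lemma le_quantile_of_rank {n : ℕ} {α : ℝ} (hα0 : 0 < α) (r : Fin (n + 1) → ℝ) (j : Fin (n + 1))
    (h : ((univ.filter fun i => r i < r j).card : ℝ) < (1 - α) * (n + 1)) :
    r j ≤ sInf {t : ℝ | 1 - α ≤
      ((univ.filter fun i : Fin (n + 1) => r i ≤ t).card : ℝ) / (n + 1)} := by
  have hn : (0 : ℝ) < (n : ℝ) + 1 := by positivity
  apply le_csInf
  · obtain ⟨M, hM⟩ := Finite.exists_le r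
    refine ⟨M, ?_⟩
    have huniv : (univ.filter fun i : Fin (n + 1) => r i ≤ M) = univ := by
      ext i; simp [hM i]
    rw [Set.mem_setOf_eq, huniv]
    rw [Finset.card_univ, Fintype.card_fin]
    rw [Nat.cast_add, Nat.cast_one, div_self hn.ne']
    linarith
  · intro t ht
    by_contra hlt
    push_neg at hlt
    rw [Set.mem_setOf_eq, le_div_iff₀ hn] at ht
    have hsub : (univ.filter fun i : Fin (n + 1) => r i ≤ t) ⊆
        univ.filter fun i => r i < r j := by
      intro i hi
      simp only [Finset.mem_filter, Finset.mem_univ, true_and] at hi ⊢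
      exact lt_of_le_of_lt hi hlt
    have hc : ((univ.filter fun i : Fin (n + 1) => r i ≤ t).card : ℝ) ≤
        ((univ.filter fun i => r i < r j).card : ℝ) :=
      Nat.cast_le.mpr (Finset.card_le_card hsub)
    linarith

/-- Full conformal prediction coverage: if the data `(X i, Y i)` are exchangeable and
the conformity scores `R i` are exchangeable, then the probability that the test score
`R (n+1)` is at most the `(1−α)`-quantile of the empirical distribution of all `n+1`
scores is at least `1 − α`. -/
theorem full_conformal_coverage
    {Ω : Type*} [MeasureSpace Ω] [IsProbabilityMeasure (volume : Measure Ω)]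
    {γ : Type*} [MeasurableSpace γ]
    (n : ℕ) (α : ℝ) (hα : α ∈ Set.Ioo (0 : ℝ) 1)
    (Z : Fin (n + 1) → Ω → γ) (R : Fin (n + 1) → Ω → ℝ)
    (hZmeas : ∀ i, Measurable (Z i)) (hRmeas : ∀ i, Measurable (R i))
    (hZexch : ∀ σ : Equiv.Perm (Fin (n + 1)),
      Measure.map (fun ω => fun i => Z (σ i) ω) volume
        = Measure.map (fun ω => fun i => Z i ω) volume)
    (hRexch : ∀ σ : Equiv.Perm (Fin (n + 1)),
      Measure.map (fun ω => fun i => R (σ i) ω) volume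
        = Measure.map (fun ω => fun i => R i ω) volume) :
    ENNReal.ofReal (1 - α) ≤
      volume {ω : Ω | R (Fin.last n) ω ≤
        sInf {t : ℝ | 1 - α ≤
          ((univ.filter fun i : Fin (n + 1) => R i ω ≤ t).card : ℝ) / (n + 1)}} := by
  classical
  obtain ⟨hα0, hα1⟩ := hα
  set m : ℕ := ⌈(1 - α) * (n + 1)⌉₊ with hm_def
  have hm_le : m ≤ n + 1 := by
    rw [hm_def]
    apply Nat.ceil_le.mpr
    have : (1 - α) * ((n : ℝ) + 1) ≤ 1 * ((n : ℝ) + 1) := by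
      apply mul_le_mul_of_nonneg_right (by linarith) (by positivity)
    push_cast
    linarith
  -- the rank events in ℝ^(n+1)
  set A : Fin (n + 1) → Set (Fin (n + 1) → ℝ) := fun j =>
    {r | (univ.filter fun i => r i < r j).card < m} with hA_def
  have hA_meas : ∀ j, MeasurableSet (A j) := by
    intro j
    have hrank : Measurable fun r : Fin (n + 1) → ℝ =>
        (univ.filter fun i => r i < r j).card := by
      have : (fun r : Fin (n + 1) → ℝ => (univ.filter fun i => r i < r j).card) =
          fun r => ∑ i, if r i < r j then 1 else 0 := by
        funext r
        rw [Finset.card_filter]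
      rw [this]
      exact Finset.measurable_sum _ fun i _ =>
        Measurable.ite
          (measurableSet_lt (measurable_pi_apply i) (measurable_pi_apply j))
          measurable_const measurable_const
    exact hrank measurableSet_Iio
  -- pull back to Ω
  have hvec : Measurable fun ω => fun i => R i ω := measurable_pi_lambda _ hRmeas
  set E : Fin (n + 1) → Set Ω := fun j => (fun ω => fun i => R i ω) ⁻¹' A j with hE_def
  have hE_meas : ∀ j, MeasurableSet (E j) := fun j => hvec (hA_meas j)
  -- all the events E j have the same probability, by exchangeability
  have hEq : ∀ j, volume (E j) = volume (E (Fin.last n)) := by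
    intro j
    set σ : Equiv.Perm (Fin (n + 1)) := Equiv.swap j (Fin.last n) with hσ_def
    have hvecσ : Measurable fun ω => fun i => R (σ i) ω :=
      measurable_pi_lambda _ fun i => hRmeas (σ i)
    have hpre : E j = (fun ω => fun i => R (σ i) ω) ⁻¹' A (Fin.last n) := by
      ext ω
      simp only [hE_def, hA_def, Set.mem_preimage, Set.mem_setOf_eq]
      have hlast : σ (Fin.last n) = j := Equiv.swap_apply_right j (Fin.last n)
      have hcards : (univ.filter fun i => R (σ i) ω < R j ω).card
          = (univ.filter fun i => R i ω < R j ω).card :=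
        card_filter_perm σ (fun i => R i ω < R j ω)
      simp only [hlast, hcards]
    rw [hpre]
    rw [← Measure.map_apply hvecσ (hA_meas (Fin.last n)),
      ← Measure.map_apply hvec (hA_meas (Fin.last n)), hRexch σ]
  -- the sum of the probabilities is at least m
  have hsum : (m : ℝ≥0∞) ≤ ∑ j, volume (E j) := by
    have h1 : ∑ j, volume (E j)
        = ∫⁻ ω, ∑ j, (E j).indicator (fun _ => (1 : ℝ≥0∞)) ω := by
      rw [lintegral_finset_sum _ fun j _ =>
        (measurable_const.indicator (hE_meas j))]
      congr 1
      funext j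
      rw [lintegral_indicator (hE_meas j)]
      simp
    have h2 : ∀ ω : Ω, (m : ℝ≥0∞) ≤ ∑ j, (E j).indicator (fun _ => (1 : ℝ≥0∞)) ω := by
      intro ω
      have hcount : ∑ j, (E j).indicator (fun _ => (1 : ℝ≥0∞)) ω
          = ((univ.filter fun j => ω ∈ E j).card : ℝ≥0∞) := by
        rw [Finset.card_filter, Nat.cast_sum]
        exact Finset.sum_congr rfl fun j _ => by
          by_cases h : ω ∈ E j <;> simp [Set.indicator, h]
      rw [hcount]
      have : m ≤ (univ.filter fun j => ω ∈ E j).card := by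
        have hEmem : ∀ j, ω ∈ E j ↔
            (univ.filter fun i => R i ω < R j ω).card < m := by
          intro j
          simp [hE_def, hA_def]
        have := rank_count (fun i => R i ω) m hm_le
        calc m ≤ (univ.filter fun j =>
              (univ.filter fun i => R i ω < R j ω).card < m).card := this
          _ = (univ.filter fun j => ω ∈ E j).card := by
              congr 1
              apply Finset.filter_congr
              intro j _
              simp [hEmem j]
      exact_mod_cast Nat.cast_le.mpr this
    calc (m : ℝ≥0∞) = ∫⁻ _ : Ω, (m : ℝ≥0∞) := by
          rw [lintegral_const, measure_univ, mul_one]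
      _ ≤ ∫⁻ ω, ∑ j, (E j).indicator (fun _ => (1 : ℝ≥0∞)) ω := lintegral_mono h2
      _ = ∑ j, volume (E j) := h1.symm
  -- hence each event has probability at least (1-α)
  have hlastE : ENNReal.ofReal (1 - α) ≤ volume (E (Fin.last n)) := by
    have hsum' : ∑ j, volume (E j) = (n + 1 : ℝ≥0∞) * volume (E (Fin.last n)) := by
      rw [Finset.sum_congr rfl fun j _ => hEq j]
      simp [Finset.card_univ, mul_comm]
    have hm_ge : ENNReal.ofReal ((1 - α) * (n + 1)) ≤ (m : ℝ≥0∞) := by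
      rw [hm_def]
      calc ENNReal.ofReal ((1 - α) * (n + 1))
          ≤ ENNReal.ofReal (⌈(1 - α) * ((n : ℝ) + 1)⌉₊ : ℝ) := by
            apply ENNReal.ofReal_le_ofReal
            push_cast
            exact Nat.le_ceil _
        _ = (⌈(1 - α) * ((n : ℝ) + 1)⌉₊ : ℝ≥0∞) := ENNReal.ofReal_natCast _
    have key : (n + 1 : ℝ≥0∞) * ENNReal.ofReal (1 - α)
        ≤ (n + 1 : ℝ≥0∞) * volume (E (Fin.last n)) := by
      have hcast : (n + 1 : ℝ≥0∞) = ENNReal.ofReal ((n : ℝ) + 1) := by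
        rw [ENNReal.ofReal_add (Nat.cast_nonneg n) zero_le_one, ENNReal.ofReal_natCast,
          ENNReal.ofReal_one]
      calc (n + 1 : ℝ≥0∞) * ENNReal.ofReal (1 - α)
          = ENNReal.ofReal ((1 - α) * (n + 1)) := by
            rw [hcast, ← ENNReal.ofReal_mul (by positivity)]
            congr 1
            ring
        _ ≤ (m : ℝ≥0∞) := hm_ge
        _ ≤ ∑ j, volume (E j) := hsum
        _ = (n + 1 : ℝ≥0∞) * volume (E (Fin.last n)) := hsum'
    exact (ENNReal.mul_le_mul_iff_right
      (by exact_mod_cast Nat.succ_ne_zero n)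
      (ENNReal.add_ne_top.mpr ⟨ENNReal.natCast_ne_top n, ENNReal.one_ne_top⟩)).mp key
  -- the event E (last) is contained in the coverage event
  refine le_trans hlastE (measure_mono ?_)
  intro ω hω
  simp only [hE_def, hA_def, Set.mem_preimage, Set.mem_setOf_eq] at hω
  simp only [Set.mem_setOf_eq]
  apply le_quantile_of_rank hα0 (fun i => R i ω) (Fin.last n)
  exact Nat.lt_ceil.mp hω
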